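/- A reflexible map M is face-bipartite if and only if it is face-reflexible. -/

import Mathlib

/-- Two flags lie in the same face iff some element of `⟨r₀, r₁⟩` maps one to the other. -/
def SameFace {Ω : Type} (r0 r1 : Equiv.Perm Ω) (x y : Ω) : Prop :=
  ∃ h ∈ Subgroup.closure ({r0, r1} : Set (Equiv.Perm Ω)), h x = y

/-- A permutation of the flags is a symmetry of the map iff it commutes with the three
adjacency involutions. -/
def IsMapSym {Ω : Type} (r0 r1 r2 : Equiv.Perm Ω) (g : Equiv.Perm Ω) : Prop :=
  g * r0 = r0 * g ∧ g * r1 = r1 * g ∧ g * r2 = r2 * g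

/-- A reflexible map (the full symmetry group is transitive on flags) is
face-bipartite — its faces admit a proper 2-coloring (a `Bool`-coloring of flags
constant on faces, with faces across an edge `r₂` differently colored) — if and only
if it is face-reflexible, i.e. it admits a half-reflexible subgroup `G` of symmetries:
`G` is not transitive on flags, but for each face its stabilizer in `G` is transitive
on the flags of that face. -/
theorem reflexible_face_bipartite_iff_face_reflexible {Ω : Type} [Fintype Ω] [Nonempty Ω]
    (r0 r1 r2 : Equiv.Perm Ω)
    (h0 : r0 * r0 = 1) (h1 : r1 * r1 = 1) (h2 : r2 * r2 = 1)
    (h02 : r0 * r2 = r2 * r0)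
    (hconn : ∀ x y : Ω, ∃ g ∈ Subgroup.closure ({r0, r1, r2} : Set (Equiv.Perm Ω)), g x = y)
    (hreflex : ∀ x y : Ω, ∃ g : Equiv.Perm Ω, IsMapSym r0 r1 r2 g ∧ g x = y) :
    (∃ c : Ω → Bool,
        (∀ x y : Ω, SameFace r0 r1 x y → c x = c y) ∧
        (∀ x : Ω, c (r2 x) ≠ c x)) ↔
    (∃ G : Subgroup (Equiv.Perm Ω),
        (∀ g ∈ G, IsMapSym r0 r1 r2 g) ∧
        (¬ ∀ x y : Ω, ∃ g ∈ G, g x = y) ∧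
        (∀ x y : Ω, SameFace r0 r1 x y → ∃ g ∈ G, g x = y)) := by
  classical
  have hr0mem : r0 ∈ Subgroup.closure ({r0, r1} : Set (Equiv.Perm Ω)) :=
    Subgroup.subset_closure (by simp)
  have hr1mem : r1 ∈ Subgroup.closure ({r0, r1} : Set (Equiv.Perm Ω)) :=
    Subgroup.subset_closure (by simp)
  have hr2r2 : ∀ x : Ω, r2 (r2 x) = x := by
    intro x
    have := congrArg (fun g : Equiv.Perm Ω => g x) h2
    simpa using this
  constructor
  · rintro ⟨c, hcf, hc2⟩
    -- color values
    have hface0 : ∀ u : Ω, c (r0 u) = c u := fun u => (hcf u (r0 u) ⟨r0, hr0mem, rfl⟩).symm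
    have hface1 : ∀ u : Ω, c (r1 u) = c u := fun u => (hcf u (r1 u) ⟨r1, hr1mem, rfl⟩).symm
    have hnot : ∀ u : Ω, c (r2 u) = ! c u := by
      intro u
      have := hc2 u
      revert this
      cases c (r2 u) <;> cases c u <;> simp
    -- closed under group ops
    have hmulcomm : ∀ (r a b : Equiv.Perm Ω), a * r = r * a → b * r = r * b →
        (a * b) * r = r * (a * b) := by
      intro r a b ha hb
      rw [mul_assoc, hb, ← mul_assoc, ha, mul_assoc]
    have hinvcomm : ∀ (r a : Equiv.Perm Ω), a * r = r * a → a⁻¹ * r = r * a⁻¹ := by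
      intro r a ha
      have := congrArg (fun z => a⁻¹ * z * a⁻¹) ha
      simp only [mul_assoc] at this
      simpa [mul_assoc] using this.symm
    set G : Subgroup (Equiv.Perm Ω) :=
      { carrier := {g | IsMapSym r0 r1 r2 g ∧ ∀ z, c (g z) = c z}
        one_mem' := by
          refine ⟨⟨by simp, by simp, by simp⟩, by simp⟩
        mul_mem' := by
          rintro a b ⟨⟨ha0, ha1, ha2⟩, hac⟩ ⟨⟨hb0, hb1, hb2⟩, hbc⟩
          refine ⟨⟨hmulcomm _ _ _ ha0 hb0, hmulcomm _ _ _ ha1 hb1, hmulcomm _ _ _ ha2 hb2,⟩, ?_⟩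
          intro z
          simp only [Equiv.Perm.mul_apply]
          rw [hac, hbc]
        inv_mem' := by
          rintro a ⟨⟨ha0, ha1, ha2⟩, hac⟩
          refine ⟨⟨hinvcomm _ _ ha0, hinvcomm _ _ ha1, hinvcomm _ _ ha2⟩, ?_⟩
          intro z
          have := hac (a⁻¹ z)
          rw [← Equiv.Perm.mul_apply, mul_inv_cancel, Equiv.Perm.one_apply] at this
          exact this.symm } with hGdef
    refine ⟨G, fun g hg => hg.1, ?_, ?_⟩
    · intro hall
      obtain ⟨x⟩ := (inferInstance : Nonempty Ω)
      obtain ⟨g, hg, hgx⟩ := hall x (r2 x)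
      have := hg.2 x
      rw [hgx] at this
      exact hc2 x this
    · intro x y hs
      obtain ⟨g, ⟨hg0, hg1, hg2⟩, hgx⟩ := hreflex x y
      have hcomm0 : ∀ z, g (r0 z) = r0 (g z) := by
        intro z
        have := congrArg (fun p : Equiv.Perm Ω => p z) hg0
        simpa using this
      have hcomm1 : ∀ z, g (r1 z) = r1 (g z) := by
        intro z
        have := congrArg (fun p : Equiv.Perm Ω => p z) hg1
        simpa using this
      have hcomm2 : ∀ z, g (r2 z) = r2 (g z) := by
        intro z
        have := congrArg (fun p : Equiv.Perm Ω => p z) hg2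
        simpa using this
      have hcxy : c x = c y := hcf x y hs
      have base : c (g x) = c x := by rw [hgx, hcxy]
      -- propagate color preservation over the whole flag set
      have key : ∀ w ∈ Subgroup.closure ({r0, r1, r2} : Set (Equiv.Perm Ω)),
          ∀ z : Ω, (c (g z) = c z ↔ c (g (w z)) = c (w z)) := by
        intro w hw
        induction hw using Subgroup.closure_induction with
        | mem s hs =>
          intro z
          rcases hs with rfl | rfl | rfl
          · rw [hcomm0, hface0, hface0]
          · rw [hcomm1, hface1, hface1]
          · rw [hcomm2, hnot, hnot]
            cases c (g z) <;> cases c z <;> simp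
        | one => intro z; simp
        | mul a b _ _ pa pb =>
          intro z
          rw [Equiv.Perm.mul_apply]
          exact (pb z).trans (pa (b z))
        | inv a _ pa =>
          intro z
          have := pa (a⁻¹ z)
          rw [show a (a⁻¹ z) = z from Equiv.apply_symm_apply a z] at this
          exact this.symm
      have hgG : g ∈ G := by
        refine ⟨⟨hg0, hg1, hg2⟩, ?_⟩
        intro z
        obtain ⟨w, hw, hwz⟩ := hconn x z
        have := (key w hw x).mp base
        rwa [hwz] at this
      exact ⟨g, hgG, hgx⟩
  · rintro ⟨G, hGsym, hGnt, hGface⟩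
    set R : Ω → Ω → Prop := fun x y => ∃ g ∈ G, g x = y with hRdef
    have Rrefl : ∀ x, R x x := fun x => ⟨1, one_mem _, by simp⟩
    have Rsymm : ∀ {x y}, R x y → R y x := by
      rintro x y ⟨g, hg, rfl⟩
      exact ⟨g⁻¹, inv_mem hg, by simp⟩
    have Rtrans : ∀ {x y z}, R x y → R y z → R x z := by
      rintro x y z ⟨g, hg, rfl⟩ ⟨g', hg', rfl⟩
      exact ⟨g' * g, mul_mem hg' hg, by simp⟩
    have Rr2 : ∀ {x y}, R x y → R (r2 x) (r2 y) := by
      rintro x y ⟨g, hg, rfl⟩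
      refine ⟨g, hg, ?_⟩
      have := congrArg (fun p : Equiv.Perm Ω => p x) (hGsym g hg).2.2
      simpa using this
    have hRr0 : ∀ x, R x (r0 x) := fun x => hGface x (r0 x) ⟨r0, hr0mem, rfl⟩
    have hRr1 : ∀ x, R x (r1 x) := fun x => hGface x (r1 x) ⟨r1, hr1mem, rfl⟩
    -- any two flags are related or related after an r2 flip
    have claim : ∀ x y : Ω, R x y ∨ R x (r2 y) := by
      intro x y
      obtain ⟨w, hw, hwx⟩ := hconn x y
      have P : ∀ z : Ω, R z (w z) ∨ R z (r2 (w z)) := by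
        clear hwx
        induction hw using Subgroup.closure_induction with
        | mem s hs =>
          intro z
          rcases hs with rfl | rfl | rfl
          · exact Or.inl (hRr0 z)
          · exact Or.inl (hRr1 z)
          · right; rw [hr2r2]; exact Rrefl z
        | one => intro z; exact Or.inl (by simpa using Rrefl z)
        | mul a b _ _ pa pb =>
          intro z
          rw [Equiv.Perm.mul_apply]
          rcases pb z with hb | hb <;> rcases pa (b z) with ha | ha
          · exact Or.inl (Rtrans hb ha)
          · exact Or.inr (Rtrans hb ha)
          · exact Or.inr (Rtrans hb (Rr2 ha))
          · left
            have := Rr2 ha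
            rw [hr2r2] at this
            exact Rtrans hb this
        | inv a _ pa =>
          intro z
          rcases pa (a⁻¹ z) with h | h
          · rw [← Equiv.Perm.mul_apply, mul_inv_cancel, Equiv.Perm.one_apply] at h
            exact Or.inl (Rsymm h)
          · rw [show a (a⁻¹ z) = z from Equiv.apply_symm_apply a z] at h
            right
            have := Rr2 (Rsymm h)
            rwa [hr2r2] at this
      rcases P x with h | h
      · exact Or.inl (by rwa [hwx] at h)
      · exact Or.inr (by rwa [hwx] at h)
    -- no flag is related to its r2-image
    have hnr2 : ∀ x, ¬ R x (r2 x) := by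
      intro x hx
      apply hGnt
      have hall : ∀ w, R w (r2 w) := by
        intro w
        rcases claim x w with h | h
        · exact Rtrans (Rtrans (Rsymm h) hx) (Rr2 h)
        · have h' : R (r2 x) w := by
            have := Rr2 h
            rwa [hr2r2] at this
          exact Rtrans (Rtrans (Rsymm h') (Rsymm hx)) h
      intro y z
      rcases claim y z with h | h
      · exact h
      · exact Rtrans h (Rsymm (hall z))
    obtain ⟨x₀⟩ := (inferInstance : Nonempty Ω)
    refine ⟨fun x => if R x₀ x then true else false, ?_, ?_⟩
    · intro x y hs
      obtain hxy := hGface x y hs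
      have hiff : R x₀ x ↔ R x₀ y := ⟨fun h => Rtrans h hxy, fun h => Rtrans h (Rsymm hxy)⟩
      simp only [hiff]
    · intro x
      by_cases h1 : R x₀ x <;> by_cases hh2 : R x₀ (r2 x)
      · exact absurd (Rtrans (Rsymm h1) hh2) (hnr2 x)
      · simp [h1, hh2]
      · simp [h1, hh2]
      · rcases claim x₀ x with h | h
        · exact absurd h h1
        · exact absurd h hh2
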